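/- Let φ̃ : {(k,i) : k ∈ ℕ, 1 ≤ i ≤ d_k} → {+,−} be any function and a ∈ ℂ. Then the φ̃-Verma module M_{φ̃}(a) is an irreducible L-module if and only if a ≠ 0. -/

import Mathlib

/-!
STATEMENT 15: for any function φ̃ : {(k,i) : k ∈ ℕ, 1 ≤ i ≤ d_k} → {+,−} and a ∈ ℂ, the
φ̃-Verma module M_{φ̃}(a) is an irreducible L-module iff a ≠ 0.
We model the sign set `{+,−}` by `Bool`, with `true` standing for `+`; `φ̃ : ℕ → ℕ → Bool`
is only relevant on pairs `(k,i)` with `1 ≤ k` and `1 ≤ i ≤ d k`.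
-/

open UniversalEnvelopingAlgebra

/-- The Heisenberg Lie algebra `L` with basis `{c} ∪ {x_{k,i} : k ∈ ℤ∖{0}, 1 ≤ i ≤ d |k|}`,
`c` central, and `[x_{k,i}, x_{l,j}] = δ_{k,-l} δ_{i,j} k c`. -/
structure HeisenbergL (d : ℕ → ℕ) (L : Type) [LieRing L] [LieAlgebra ℂ L] : Type where
  c : L
  x : ℤ → ℕ → L
  basis : Module.Basis (Option {p : ℤ × ℕ // p.1 ≠ 0 ∧ 1 ≤ p.2 ∧ p.2 ≤ d p.1.natAbs}) ℂ L
  basis_none : basis none = c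
  basis_some : ∀ p, basis (some p) = x p.1.1 p.1.2
  lie_c : ∀ y : L, ⁅c, y⁆ = 0
  lie_x_x : ∀ k l i j, k ≠ 0 → l ≠ 0 → 1 ≤ i → i ≤ d k.natAbs → 1 ≤ j → j ≤ d l.natAbs →
    ⁅x k i, x l j⁆ = if k = -l ∧ i = j then (k : ℂ) • c else 0

/-- Indices of the basis vectors `x_{k,i}` spanning `L_{φ̃}^+`: those `x_{k,i}` with `k > 0`
and `φ̃(k,i) = +`, together with the `x_{-k,i}` with `k > 0` and `φ̃(k,i) = -`. -/
def posIdxT (d : ℕ → ℕ) (φ : ℕ → ℕ → Bool) : Set (ℤ × ℕ) :=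
  {p | p.1 ≠ 0 ∧ 1 ≤ p.2 ∧ p.2 ≤ d p.1.natAbs ∧
    ((0 < p.1 ∧ φ p.1.natAbs p.2 = true) ∨ (p.1 < 0 ∧ φ p.1.natAbs p.2 = false))}

variable {d : ℕ → ℕ} {L : Type} [LieRing L] [LieAlgebra ℂ L]

/-- The left ideal of `U(L)` generated by `c - a·1` and `L_{φ̃}^+`. -/
def vermaIdealT (E : HeisenbergL d L) (φ : ℕ → ℕ → Bool) (a : ℂ) :
    Submodule (UniversalEnvelopingAlgebra ℂ L) (UniversalEnvelopingAlgebra ℂ L) :=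
  Submodule.span (UniversalEnvelopingAlgebra ℂ L)
    ({ι ℂ E.c - algebraMap ℂ (UniversalEnvelopingAlgebra ℂ L) a} ∪
      ((fun p : ℤ × ℕ => ι ℂ (E.x p.1 p.2)) '' posIdxT d φ))

/-- The φ̃-Verma module `M_{φ̃}(a)`, realized as `U(L)/U(L)·⟨c - a, L_{φ̃}^+⟩`. -/
def VermaModT (E : HeisenbergL d L) (φ : ℕ → ℕ → Bool) (a : ℂ) :=
  UniversalEnvelopingAlgebra ℂ L ⧸ vermaIdealT E φ a

instance (E : HeisenbergL d L) (φ : ℕ → ℕ → Bool) (a : ℂ) : AddCommGroup (VermaModT E φ a) :=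
  inferInstanceAs (AddCommGroup (UniversalEnvelopingAlgebra ℂ L ⧸ vermaIdealT E φ a))

instance (E : HeisenbergL d L) (φ : ℕ → ℕ → Bool) (a : ℂ) :
    Module (UniversalEnvelopingAlgebra ℂ L) (VermaModT E φ a) :=
  inferInstanceAs (Module (UniversalEnvelopingAlgebra ℂ L)
    (UniversalEnvelopingAlgebra ℂ L ⧸ vermaIdealT E φ a))

attribute [local instance 100] LieRing.ofAssociativeRing

section Aux
open MvPolynomial

variable {d : ℕ → ℕ} {L : Type} [LieRing L] [LieAlgebra ℂ L]

/-- Basis index type of `L` (excluding `c`). -/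
abbrev BI (d : ℕ → ℕ) : Type :=
  {p : ℤ × ℕ // p.1 ≠ 0 ∧ 1 ≤ p.2 ∧ p.2 ≤ d p.1.natAbs}

/-- Negative index type: basis indices not in `posIdxT`. -/
abbrev NI (d : ℕ → ℕ) (φ : ℕ → ℕ → Bool) : Type :=
  {p : ℤ × ℕ // (p.1 ≠ 0 ∧ 1 ≤ p.2 ∧ p.2 ≤ d p.1.natAbs) ∧ p ∉ posIdxT d φ}

/-- Fock space. -/
abbrev Fock (d : ℕ → ℕ) (φ : ℕ → ℕ → Bool) : Type := MvPolynomial (NI d φ) ℂ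

lemma partner_of_pos {φ : ℕ → ℕ → Bool} {p : ℤ × ℕ} (hp : p ∈ posIdxT d φ) :
    (((-p.1, p.2) : ℤ × ℕ).1 ≠ 0 ∧ 1 ≤ ((-p.1, p.2) : ℤ × ℕ).2 ∧
      ((-p.1, p.2) : ℤ × ℕ).2 ≤ d ((-p.1, p.2) : ℤ × ℕ).1.natAbs) ∧
      ((-p.1, p.2) : ℤ × ℕ) ∉ posIdxT d φ := by
  obtain ⟨h1, h2, h3, h4⟩ := hp
  refine ⟨⟨neg_ne_zero.2 h1, h2, by simpa [Int.natAbs_neg] using h3⟩, ?_⟩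
  rintro ⟨-, -, -, h5⟩
  simp only [Int.natAbs_neg] at h5
  rcases h4 with ⟨hk, hφ⟩ | ⟨hk, hφ⟩ <;> rcases h5 with ⟨hk', hφ'⟩ | ⟨hk', hφ'⟩ <;>
      simp_all <;> omega

lemma partner_of_neg {φ : ℕ → ℕ → Bool} (q : NI d φ) :
    ((-q.val.1, q.val.2) : ℤ × ℕ) ∈ posIdxT d φ := by
  obtain ⟨⟨h1, h2, h3⟩, h4⟩ := q.property
  refine ⟨neg_ne_zero.2 h1, h2, by simpa [Int.natAbs_neg] using h3, ?_⟩
  simp only [Int.natAbs_neg]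
  rcases lt_or_gt_of_ne h1 with hk | hk
  · left
    refine ⟨by omega, ?_⟩
    by_contra hφ
    exact h4 ⟨h1, h2, h3, Or.inr ⟨hk, by simpa using hφ⟩⟩
  · right
    refine ⟨by omega, ?_⟩
    by_contra hφ
    exact h4 ⟨h1, h2, h3, Or.inl ⟨hk, by simpa using hφ⟩⟩

variable (a : ℂ)

open Classical in
/-- images of the basis vectors under the Fock representation -/
noncomputable def gop (d : ℕ → ℕ) (φ : ℕ → ℕ → Bool) (a : ℂ) :
    Option (BI d) → Module.End ℂ (Fock d φ)
  | none => a • 1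
  | some p =>
      if h : p.val ∈ posIdxT d φ then
        (a * p.val.1) • (pderiv (⟨(-p.val.1, p.val.2), partner_of_pos h⟩ : NI d φ)).toLinearMap
      else LinearMap.mulLeft ℂ (X (⟨p.val, p.property, h⟩ : NI d φ))

variable (E : HeisenbergL d L) (φ : ℕ → ℕ → Bool)

/-- the Fock representation, as a linear map -/
noncomputable def rho0 : L →ₗ[ℂ] Module.End ℂ (Fock d φ) :=
  E.basis.constr ℂ (gop d φ a)

lemma rho0_c : rho0 a E φ E.c = a • 1 := by
  rw [← E.basis_none, rho0, Module.Basis.constr_basis, gop]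

lemma rho0_x_pos {p : ℤ × ℕ} (hp : p ∈ posIdxT d φ) :
    rho0 a E φ (E.x p.1 p.2) =
      (a * p.1) • (pderiv (⟨(-p.1, p.2), partner_of_pos hp⟩ : NI d φ)).toLinearMap := by
  obtain ⟨h1, h2, h3, -⟩ := id hp
  have hb := E.basis_some (⟨p, h1, h2, h3⟩ : BI d)
  rw [← hb, rho0, Module.Basis.constr_basis]
  simp only [gop]
  rw [dif_pos hp]

lemma rho0_x_neg {p : ℤ × ℕ} (hb0 : p.1 ≠ 0 ∧ 1 ≤ p.2 ∧ p.2 ≤ d p.1.natAbs)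
    (h4 : p ∉ posIdxT d φ) :
    rho0 a E φ (E.x p.1 p.2) = LinearMap.mulLeft ℂ (X (⟨p, hb0, h4⟩ : NI d φ)) := by
  obtain ⟨h1, h2, h3⟩ := hb0
  have hb := E.basis_some (⟨p, h1, h2, h3⟩ : BI d)
  rw [← hb, rho0, Module.Basis.constr_basis]
  simp only [gop]
  rw [dif_neg h4]

end Aux
section Aux2
open MvPolynomial

lemma coeff_pderiv {σ : Type} [DecidableEq σ] (i : σ) (k : σ →₀ ℕ) (p : MvPolynomial σ ℂ) :
    coeff k (pderiv i p) = (k i + 1) * coeff (k + Finsupp.single i 1) p := by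
  induction p using MvPolynomial.induction_on' with
  | add p q hp hq => simp [map_add, hp, hq, mul_add]
  | monomial m b =>
    rw [pderiv_monomial]
    by_cases h : m = k + Finsupp.single i 1
    · subst h
      rw [coeff_monomial, coeff_monomial, if_pos rfl, if_pos (add_tsub_cancel_right _ _)]
      simp [mul_comm]
    · rw [coeff_monomial, coeff_monomial, if_neg h, mul_zero]
      by_cases h2 : m i = 0
      · simp [h2]
      · rw [if_neg]
        intro hk
        apply h
        rw [← hk, tsub_add_cancel_of_le]
        exact Finsupp.single_le_iff.2 (by omega)

lemma pderiv_comm' {σ : Type} [DecidableEq σ] (i j : σ) (f : MvPolynomial σ ℂ) :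
    pderiv i (pderiv j f) = pderiv j (pderiv i f) := by
  apply MvPolynomial.ext; intro k
  rw [_root_.coeff_pderiv, _root_.coeff_pderiv, _root_.coeff_pderiv, _root_.coeff_pderiv]
  have hadd : k + Finsupp.single i 1 + Finsupp.single j 1
      = k + Finsupp.single j 1 + Finsupp.single i 1 := by
    rw [add_assoc, add_assoc, add_comm (Finsupp.single i 1)]
  rw [hadd]
  by_cases h : i = j
  · subst h; ring
  · rw [Finsupp.add_apply, Finsupp.add_apply, Finsupp.single_apply, Finsupp.single_apply,
      if_neg h, if_neg (Ne.symm h)]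
    ring

lemma pderiv_comp_mulLeft {σ : Type} [DecidableEq σ] (q q' : σ) :
    (pderiv q).toLinearMap * LinearMap.mulLeft ℂ (X q' : MvPolynomial σ ℂ) =
      LinearMap.mulLeft ℂ (X q' : MvPolynomial σ ℂ) * (pderiv q).toLinearMap
        + if q' = q then 1 else 0 := by
  apply LinearMap.ext; intro f
  by_cases h : q' = q
  · subst h
    simp [Module.End.mul_apply, pderiv_mul, pderiv_X_self, add_comm]
  · simp [Module.End.mul_apply, pderiv_mul, pderiv_X_of_ne h, if_neg h]

end Aux2
section Aux3
open MvPolynomial UniversalEnvelopingAlgebra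

variable {d : ℕ → ℕ} {L : Type} [LieRing L] [LieAlgebra ℂ L]
variable (a : ℂ) (E : HeisenbergL d L) (φ : ℕ → ℕ → Bool)

set_option maxHeartbeats 1000000 in
lemma rho0_key (i j : Option (BI d)) :
    rho0 a E φ ⁅E.basis i, E.basis j⁆ =
      rho0 a E φ (E.basis i) * rho0 a E φ (E.basis j)
        - rho0 a E φ (E.basis j) * rho0 a E φ (E.basis i) := by
  rcases i with _ | p
  · rw [E.basis_none, E.lie_c, map_zero, rho0_c, smul_mul_assoc, one_mul, mul_smul_comm,
      mul_one, sub_self]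
  rcases j with _ | q
  · rw [E.basis_none, ← lie_skew, E.lie_c, neg_zero, map_zero, rho0_c,
      smul_mul_assoc, one_mul, mul_smul_comm, mul_one, sub_self]
  rw [E.basis_some, E.basis_some]
  obtain ⟨hp1, hp2, hp3⟩ := p.property
  obtain ⟨hq1, hq2, hq3⟩ := q.property
  rw [E.lie_x_x _ _ _ _ hp1 hq1 hp2 hp3 hq2 hq3]
  by_cases hpp : p.val ∈ posIdxT d φ <;> by_cases hqp : q.val ∈ posIdxT d φ
  · -- both positive
    rw [rho0_x_pos a E φ hpp, rho0_x_pos a E φ hqp]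
    have hcond : ¬(p.val.1 = -q.val.1 ∧ p.val.2 = q.val.2) := by
      rintro ⟨h1, h2⟩
      apply (partner_of_pos hqp).2
      have h5 : ((-q.val.1, q.val.2) : ℤ × ℕ) = p.val := by rw [← h1, ← h2]
      rw [h5]; exact hpp
    rw [if_neg hcond, map_zero, smul_mul_assoc, smul_mul_assoc, mul_smul_comm, mul_smul_comm]
    rw [show (pderiv (⟨(-p.val.1, p.val.2), partner_of_pos hpp⟩ : NI d φ)).toLinearMap *
        (pderiv (⟨(-q.val.1, q.val.2), partner_of_pos hqp⟩ : NI d φ)).toLinearMap =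
        (pderiv (⟨(-q.val.1, q.val.2), partner_of_pos hqp⟩ : NI d φ)).toLinearMap *
        (pderiv (⟨(-p.val.1, p.val.2), partner_of_pos hpp⟩ : NI d φ)).toLinearMap from
      LinearMap.ext fun f => pderiv_comm' _ _ f]
    rw [smul_comm, sub_self]
  · -- p positive, q negative
    rw [rho0_x_pos a E φ hpp, rho0_x_neg a E φ ⟨hq1, hq2, hq3⟩ hqp]
    rw [smul_mul_assoc, mul_smul_comm, pderiv_comp_mulLeft, smul_add, add_sub_cancel_left]
    by_cases hcond : p.val.1 = -q.val.1 ∧ p.val.2 = q.val.2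
    · rw [if_pos hcond, map_smul, rho0_c]
      have heq : (⟨q.val, ⟨hq1, hq2, hq3⟩, hqp⟩ : NI d φ)
          = (⟨(-p.val.1, p.val.2), partner_of_pos hpp⟩ : NI d φ) := by
        apply Subtype.ext
        show q.val = ((-p.val.1, p.val.2) : ℤ × ℕ)
        have h3 : -p.val.1 = q.val.1 := by omega
        rw [h3, hcond.2]
      rw [if_pos heq, smul_smul, mul_comm (p.val.1 : ℂ) a]
    · rw [if_neg hcond, map_zero, if_neg, smul_zero]
      intro hh
      apply hcond
      have hv := congrArg Subtype.val hh
      have h1 := congrArg Prod.fst hv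
      have h2 := congrArg Prod.snd hv
      dsimp at h1 h2
      exact ⟨by omega, h2.symm⟩
  · -- p negative, q positive
    rw [rho0_x_neg a E φ ⟨hp1, hp2, hp3⟩ hpp, rho0_x_pos a E φ hqp]
    rw [smul_mul_assoc, mul_smul_comm, pderiv_comp_mulLeft, smul_add, sub_add_eq_sub_sub,
      sub_self, zero_sub]
    by_cases hcond : p.val.1 = -q.val.1 ∧ p.val.2 = q.val.2
    · have heq : (⟨p.val, ⟨hp1, hp2, hp3⟩, hpp⟩ : NI d φ)
          = (⟨(-q.val.1, q.val.2), partner_of_pos hqp⟩ : NI d φ) := by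
        apply Subtype.ext
        show p.val = ((-q.val.1, q.val.2) : ℤ × ℕ)
        rw [← hcond.1, ← hcond.2]
      rw [if_pos hcond, if_pos heq, map_smul, rho0_c, smul_smul]
      have : (p.val.1 : ℂ) * a = -(a * q.val.1) := by
        rw [hcond.1]; push_cast; ring
      rw [this, neg_smul]
    · rw [if_neg hcond, map_zero, if_neg, smul_zero, neg_zero]
      intro hh
      apply hcond
      have hv := congrArg Subtype.val hh
      have h1 := congrArg Prod.fst hv
      have h2 := congrArg Prod.snd hv
      dsimp at h1 h2
      exact ⟨by omega, h2⟩
  · -- both negative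
    rw [rho0_x_neg a E φ ⟨hp1, hp2, hp3⟩ hpp, rho0_x_neg a E φ ⟨hq1, hq2, hq3⟩ hqp]
    have hcond : ¬(p.val.1 = -q.val.1 ∧ p.val.2 = q.val.2) := by
      rintro ⟨h1, h2⟩
      apply hqp
      have h5 : ((-p.val.1, p.val.2) : ℤ × ℕ) = q.val := by
        have : -p.val.1 = q.val.1 := by omega
        rw [this, h2]
      rw [← h5]
      exact partner_of_neg (⟨p.val, ⟨hp1, hp2, hp3⟩, hpp⟩ : NI d φ)
    have hXc : LinearMap.mulLeft ℂ (X (⟨p.val, ⟨hp1, hp2, hp3⟩, hpp⟩ : NI d φ) : Fock d φ) *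
        LinearMap.mulLeft ℂ (X (⟨q.val, ⟨hq1, hq2, hq3⟩, hqp⟩ : NI d φ) : Fock d φ) =
        LinearMap.mulLeft ℂ (X (⟨q.val, ⟨hq1, hq2, hq3⟩, hqp⟩ : NI d φ) : Fock d φ) *
        LinearMap.mulLeft ℂ (X (⟨p.val, ⟨hp1, hp2, hp3⟩, hpp⟩ : NI d φ) : Fock d φ) :=
      LinearMap.ext fun f => by
        simp only [Module.End.mul_apply, LinearMap.mulLeft_apply]
        ring
    rw [if_neg hcond, map_zero, hXc, sub_self]

end Aux3
section Aux4
open MvPolynomial UniversalEnvelopingAlgebra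

variable {d : ℕ → ℕ} {L : Type} [LieRing L] [LieAlgebra ℂ L]
variable (a : ℂ) (E : HeisenbergL d L) (φ : ℕ → ℕ → Bool)

noncomputable instance : Module ℂ (VermaModT E φ a) :=
  inferInstanceAs (Module ℂ (UniversalEnvelopingAlgebra ℂ L ⧸ vermaIdealT E φ a))

instance : IsScalarTower ℂ (UniversalEnvelopingAlgebra ℂ L) (VermaModT E φ a) :=
  inferInstanceAs (IsScalarTower ℂ (UniversalEnvelopingAlgebra ℂ L)
    (UniversalEnvelopingAlgebra ℂ L ⧸ vermaIdealT E φ a))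

instance : SMulCommClass ℂ (UniversalEnvelopingAlgebra ℂ L) (VermaModT E φ a) :=
  inferInstanceAs (SMulCommClass ℂ (UniversalEnvelopingAlgebra ℂ L)
    (UniversalEnvelopingAlgebra ℂ L ⧸ vermaIdealT E φ a))

lemma rho0_lie (x y : L) :
    rho0 a E φ ⁅x, y⁆ = ⁅rho0 a E φ x, rho0 a E φ y⁆ := by
  let B1 : L →ₗ[ℂ] L →ₗ[ℂ] Module.End ℂ (Fock d φ) :=
    LinearMap.mk₂ ℂ (fun x y => rho0 a E φ ⁅x, y⁆)
      (fun m₁ m₂ n => by rw [add_lie, map_add])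
      (fun c m n => by rw [smul_lie, map_smul])
      (fun m n₁ n₂ => by rw [lie_add, map_add])
      (fun c m n => by rw [lie_smul, map_smul])
  let B2 : L →ₗ[ℂ] L →ₗ[ℂ] Module.End ℂ (Fock d φ) :=
    LinearMap.mk₂ ℂ (fun x y => rho0 a E φ x * rho0 a E φ y - rho0 a E φ y * rho0 a E φ x)
      (fun m₁ m₂ n => by simp only [map_add]; noncomm_ring)
      (fun c m n => by
        simp only [map_smul, smul_mul_assoc, mul_smul_comm, smul_sub])
      (fun m n₁ n₂ => by simp only [map_add]; noncomm_ring)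
      (fun c m n => by
        simp only [map_smul, smul_mul_assoc, mul_smul_comm, smul_sub])
  have hB : B1 = B2 :=
    E.basis.ext fun i => E.basis.ext fun j => by
      simp only [B1, B2, LinearMap.mk₂_apply]
      exact rho0_key a E φ i j
  have := LinearMap.congr_fun (LinearMap.congr_fun hB x) y
  simpa only [B1, B2, LinearMap.mk₂_apply, Ring.lie_def] using this

/-- the Fock representation as a morphism of Lie algebras -/
noncomputable def rhoL : L →ₗ⁅ℂ⁆ Module.End ℂ (Fock d φ) :=
  { rho0 a E φ with
    map_lie' := by intro x y; exact rho0_lie a E φ x y }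

/-- the Fock representation of the enveloping algebra -/
noncomputable def Phi : UniversalEnvelopingAlgebra ℂ L →ₐ[ℂ] Module.End ℂ (Fock d φ) :=
  UniversalEnvelopingAlgebra.lift ℂ (rhoL a E φ)

lemma Phi_ι (y : L) : Phi a E φ (ι ℂ y) = rho0 a E φ y :=
  UniversalEnvelopingAlgebra.lift_ι_apply ℂ _ y

/-- the left ideal of elements killing the vacuum vector `1` -/
def annOne : Submodule (UniversalEnvelopingAlgebra ℂ L) (UniversalEnvelopingAlgebra ℂ L) where
  carrier := {u | Phi a E φ u 1 = 0}
  add_mem' := by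
    intro u v hu hv
    simp only [Set.mem_setOf_eq, map_add, LinearMap.add_apply] at *
    rw [hu, hv, add_zero]
  zero_mem' := by simp
  smul_mem' := by
    intro w u hu
    simp only [Set.mem_setOf_eq, smul_eq_mul, map_mul, Module.End.mul_apply] at *
    rw [hu, map_zero]

lemma verma_le_annOne : vermaIdealT E φ a ≤ annOne a E φ := by
  rw [vermaIdealT, Submodule.span_le]
  rintro u (hu | ⟨p, hp, rfl⟩)
  case inl =>
    rw [Set.mem_singleton_iff] at hu
    subst hu
    show Phi a E φ _ 1 = 0
    rw [map_sub, Phi_ι, rho0_c, LinearMap.sub_apply]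
    have : Phi a E φ (algebraMap ℂ _ a) = algebraMap ℂ _ a := by
      rw [AlgHom.commutes]
    rw [this]
    show a • (1 : Fock d φ) - a • (1 : Fock d φ) = 0
    rw [sub_self]
  case inr =>
    show Phi a E φ _ 1 = 0
    rw [Phi_ι, rho0_x_pos a E φ hp]
    show (a * p.1) • pderiv _ (1 : Fock d φ) = 0
    rw [pderiv_one, smul_zero]

/-- the induced linear map from the Verma module to the Fock space -/
noncomputable def fbar : VermaModT E φ a →ₗ[ℂ] Fock d φ :=
  Submodule.liftQ ((vermaIdealT E φ a).restrictScalars ℂ)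
    { toFun := fun u => Phi a E φ u 1
      map_add' := fun u v => by simp
      map_smul' := fun b u => by simp }
    (by
      intro u hu
      exact verma_le_annOne a E φ hu) ∘ₗ
  (Submodule.Quotient.restrictScalarsEquiv ℂ (vermaIdealT E φ a)).symm.toLinearMap

lemma fbar_mk (u : UniversalEnvelopingAlgebra ℂ L) :
    fbar a E φ (Submodule.Quotient.mk u) = Phi a E φ u 1 := by
  rfl

lemma fbar_smul (u : UniversalEnvelopingAlgebra ℂ L) (m : VermaModT E φ a) :
    fbar a E φ (u • m) = Phi a E φ u (fbar a E φ m) := by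
  obtain ⟨w, rfl⟩ := Submodule.Quotient.mk_surjective _ m
  erw [← Submodule.Quotient.mk_smul, fbar_mk, fbar_mk]
  show Phi a E φ (u * w) 1 = _
  rw [map_mul]
  rfl

end Aux4
section Aux5
open MvPolynomial UniversalEnvelopingAlgebra

variable {d : ℕ → ℕ} {L : Type} [LieRing L] [LieAlgebra ℂ L]

/-- If an algebra morphism from `U(L)` sends the image of `L` into a subalgebra, its whole
range lies in that subalgebra. -/
lemma uea_mem_subalgebra {B : Type} [Ring B] [Algebra ℂ B]
    (Ψ : UniversalEnvelopingAlgebra ℂ L →ₐ[ℂ] B)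
    (S : Subalgebra ℂ B) (h : ∀ y : L, Ψ (ι ℂ y) ∈ S) (u : UniversalEnvelopingAlgebra ℂ L) :
    Ψ u ∈ S := by
  let f : L →ₗ⁅ℂ⁆ S :=
    { toFun := fun y => ⟨Ψ (ι ℂ y), h y⟩
      map_add' := fun y z => by apply Subtype.ext; simp
      map_smul' := fun b y => by apply Subtype.ext; simp
      map_lie' := by
        intro y z
        apply Subtype.ext
        show Ψ (ι ℂ ⁅y, z⁆) = _
        rw [LieHom.map_lie, Ring.lie_def, map_sub, map_mul, map_mul]
        rfl }
  have key : S.val.comp (UniversalEnvelopingAlgebra.lift ℂ f) = Ψ := by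
    symm
    apply UniversalEnvelopingAlgebra.hom_ext
    apply LieHom.ext
    intro y
    show Ψ (ι ℂ y) = S.val (UniversalEnvelopingAlgebra.lift ℂ f (ι ℂ y))
    rw [UniversalEnvelopingAlgebra.lift_ι_apply]
    rfl
  rw [← key]
  exact (UniversalEnvelopingAlgebra.lift ℂ f u).property

end Aux5
section Aux6
open MvPolynomial UniversalEnvelopingAlgebra

variable {d : ℕ → ℕ} {L : Type} [LieRing L] [LieAlgebra ℂ L]
variable (a : ℂ) (E : HeisenbergL d L) (φ : ℕ → ℕ → Bool)

/-- image in `U(L)` of a negative basis vector -/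
noncomputable def xneg (E : HeisenbergL d L) (φ : ℕ → ℕ → Bool) (q : NI d φ) :
    UniversalEnvelopingAlgebra ℂ L :=
  ι ℂ (E.x q.val.1 q.val.2)

lemma bracket_neg_neg (q q' : NI d φ) : ⁅E.x q.val.1 q.val.2, E.x q'.val.1 q'.val.2⁆ = 0 := by
  obtain ⟨⟨h1, h2, h3⟩, h4⟩ := q.property
  obtain ⟨⟨h1', h2', h3'⟩, h4'⟩ := q'.property
  rw [E.lie_x_x _ _ _ _ h1 h1' h2 h3 h2' h3', if_neg]
  rintro ⟨hc1, hc2⟩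
  apply h4'
  have h5 : ((-q.val.1, q.val.2) : ℤ × ℕ) = q'.val := by
    have : -q.val.1 = q'.val.1 := by omega
    rw [this, hc2]
  rw [← h5]
  exact partner_of_neg (⟨q.val, ⟨h1, h2, h3⟩, h4⟩ : NI d φ)

lemma xneg_comm (q q' : NI d φ) : Commute (xneg E φ q) (xneg E φ q') := by
  have h := LieHom.map_lie (ι ℂ : L →ₗ⁅ℂ⁆ UniversalEnvelopingAlgebra ℂ L) (E.x q.val.1 q.val.2) (E.x q'.val.1 q'.val.2)
  rw [bracket_neg_neg, map_zero, Ring.lie_def] at h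
  exact sub_eq_zero.mp h.symm

lemma c_comm (y : L) : Commute (ι ℂ E.c) (ι ℂ y : UniversalEnvelopingAlgebra ℂ L) := by
  have h := LieHom.map_lie (ι ℂ : L →ₗ⁅ℂ⁆ UniversalEnvelopingAlgebra ℂ L) E.c y
  rw [E.lie_c, map_zero, Ring.lie_def] at h
  exact sub_eq_zero.mp h.symm

/-- the monomial vectors in the Verma module -/
noncomputable def mon (l : List (NI d φ)) : VermaModT E φ a :=
  Submodule.Quotient.mk ((l.map (xneg E φ)).prod)

lemma mon_nil : mon a E φ [] = Submodule.Quotient.mk 1 := by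
  rw [mon, List.map_nil, List.prod_nil]

lemma mon_cons (q : NI d φ) (l : List (NI d φ)) :
    mon a E φ (q :: l) = xneg E φ q • mon a E φ l := by
  erw [mon, mon, List.map_cons, List.prod_cons, ← Submodule.Quotient.mk_smul]
  rfl

/-- span of the monomial vectors -/
noncomputable def monSpan : Submodule ℂ (VermaModT E φ a) :=
  Submodule.span ℂ (Set.range (mon a E φ))

lemma smul_monSpan (q : NI d φ) {m : VermaModT E φ a} (hm : m ∈ monSpan a E φ) :
    xneg E φ q • m ∈ monSpan a E φ := by
  induction hm using Submodule.span_induction with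
  | mem x hx =>
    obtain ⟨l, rfl⟩ := hx
    rw [← mon_cons]
    exact Submodule.subset_span ⟨q :: l, rfl⟩
  | zero => rw [smul_zero]; exact zero_mem _
  | add x y _ _ hx hy => rw [smul_add]; exact add_mem hx hy
  | smul b x _ hx => rw [smul_comm]; exact Submodule.smul_mem _ b hx

lemma c_smul_mon (l : List (NI d φ)) :
    (ι ℂ E.c : UniversalEnvelopingAlgebra ℂ L) • mon a E φ l = a • mon a E φ l := by
  induction l with
  | nil =>
    erw [mon_nil, ← Submodule.Quotient.mk_smul, ← Submodule.Quotient.mk_smul, smul_eq_mul,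
      mul_one]
    erw [← sub_eq_zero, ← Submodule.Quotient.mk_sub, Submodule.Quotient.mk_eq_zero]
    have : a • (1 : UniversalEnvelopingAlgebra ℂ L) = algebraMap ℂ _ a :=
      (Algebra.algebraMap_eq_smul_one a).symm
    rw [this]
    apply Submodule.subset_span
    exact Or.inl rfl
  | cons q l ih =>
    rw [mon_cons, ← mul_smul,
      show (ι ℂ E.c : UniversalEnvelopingAlgebra ℂ L) * xneg E φ q
          = xneg E φ q * ι ℂ E.c from c_comm E (E.x q.val.1 q.val.2),
      mul_smul, ih, smul_comm]

lemma pos_smul_mon {p : ℤ × ℕ} (hp : p ∈ posIdxT d φ) (l : List (NI d φ)) :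
    (ι ℂ (E.x p.1 p.2) : UniversalEnvelopingAlgebra ℂ L) • mon a E φ l ∈ monSpan a E φ := by
  induction l with
  | nil =>
    erw [mon_nil, ← Submodule.Quotient.mk_smul, smul_eq_mul, mul_one,
      show (Submodule.Quotient.mk (ι ℂ (E.x p.1 p.2)) : VermaModT E φ a) = 0 from
        (Submodule.Quotient.mk_eq_zero _).2 (Submodule.subset_span (Or.inr ⟨p, hp, rfl⟩))]
    exact zero_mem _
  | cons q l ih =>
    obtain ⟨hp1, hp2, hp3, -⟩ := id hp
    obtain ⟨⟨hq1, hq2, hq3⟩, hq4⟩ := q.property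
    have hbr := LieHom.map_lie (ι ℂ : L →ₗ⁅ℂ⁆ UniversalEnvelopingAlgebra ℂ L) (E.x p.1 p.2) (E.x q.val.1 q.val.2)
    rw [Ring.lie_def] at hbr
    have hswap : ι ℂ (E.x p.1 p.2) * xneg E φ q
        = xneg E φ q * ι ℂ (E.x p.1 p.2) + ι ℂ ⁅E.x p.1 p.2, E.x q.val.1 q.val.2⁆ := by
      unfold xneg
      rw [hbr]
      noncomm_ring
    rw [mon_cons, ← mul_smul]
    show (ι ℂ (E.x p.1 p.2) * xneg E φ q) • _ ∈ _
    rw [hswap, add_smul, mul_smul]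
    apply add_mem
    · exact smul_monSpan a E φ q ih
    · rw [E.lie_x_x _ _ _ _ hp1 hq1 hp2 hp3 hq2 hq3]
      by_cases hcond : p.1 = -q.val.1 ∧ p.2 = q.val.2
      · rw [if_pos hcond, map_smul, smul_assoc, c_smul_mon]
        exact Submodule.smul_mem _ _ (Submodule.smul_mem _ _
          (Submodule.subset_span ⟨l, rfl⟩))
      · rw [if_neg hcond, map_zero, zero_smul]
        exact zero_mem _

end Aux6
section Aux7
open MvPolynomial UniversalEnvelopingAlgebra

variable {d : ℕ → ℕ} {L : Type} [LieRing L] [LieAlgebra ℂ L]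
variable (a : ℂ) (E : HeisenbergL d L) (φ : ℕ → ℕ → Bool)

lemma monSpan_top : monSpan a E φ = ⊤ := by
  -- the subalgebra of elements preserving `monSpan`
  let A : Subalgebra ℂ (UniversalEnvelopingAlgebra ℂ L) :=
    { carrier := {u | ∀ m ∈ monSpan a E φ, u • m ∈ monSpan a E φ}
      mul_mem' := fun {u} {v} hu hv m hm => by
        rw [mul_smul]; exact hu _ (hv _ hm)
      one_mem' := fun m hm => by rw [one_smul]; exact hm
      add_mem' := fun {u} {v} hu hv m hm => by
        rw [add_smul]; exact add_mem (hu _ hm) (hv _ hm)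
      zero_mem' := fun m hm => by rw [zero_smul]; exact zero_mem _
      algebraMap_mem' := fun b m hm => by
        rw [algebraMap_smul]; exact Submodule.smul_mem _ b hm }
  -- the subspace of Lie algebra elements achieving membership
  let V : Submodule ℂ L :=
    { carrier := {y | ∀ m ∈ monSpan a E φ, (ι ℂ y : UniversalEnvelopingAlgebra ℂ L) • m ∈ monSpan a E φ}
      add_mem' := fun {y} {z} hy hz m hm => by
        rw [map_add, add_smul]; exact add_mem (hy _ hm) (hz _ hm)
      zero_mem' := fun m hm => by rw [map_zero, zero_smul]; exact zero_mem _
      smul_mem' := fun b y hy m hm => by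
        rw [map_smul, smul_assoc]; exact Submodule.smul_mem _ b (hy _ hm) }
  have hbasis : ∀ i, E.basis i ∈ V := by
    intro i
    rcases i with _ | p
    · rw [E.basis_none]
      intro m hm
      induction hm using Submodule.span_induction with
      | mem x hx =>
        obtain ⟨l, rfl⟩ := hx
        rw [c_smul_mon]
        exact Submodule.smul_mem _ a (Submodule.subset_span ⟨l, rfl⟩)
      | zero => rw [smul_zero]; exact zero_mem _
      | add x y _ _ hx hy => rw [smul_add]; exact add_mem hx hy
      | smul b x _ hx => rw [smul_comm]; exact Submodule.smul_mem _ b hx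
    · rw [E.basis_some]
      by_cases hpp : p.val ∈ posIdxT d φ
      · intro m hm
        induction hm using Submodule.span_induction with
        | mem x hx =>
          obtain ⟨l, rfl⟩ := hx
          exact pos_smul_mon a E φ hpp l
        | zero => rw [smul_zero]; exact zero_mem _
        | add x y _ _ hx hy => rw [smul_add]; exact add_mem hx hy
        | smul b x _ hx => rw [smul_comm]; exact Submodule.smul_mem _ b hx
      · intro m hm
        exact smul_monSpan a E φ ⟨p.val, p.property, hpp⟩ hm
  have hV : ∀ y : L, y ∈ V := by
    intro y
    have : Submodule.span ℂ (Set.range E.basis) ≤ V :=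
      Submodule.span_le.2 (by rintro - ⟨i, rfl⟩; exact hbasis i)
    rw [E.basis.span_eq] at this
    exact this trivial
  have hA : ∀ u : UniversalEnvelopingAlgebra ℂ L, u ∈ A := by
    intro u
    have := uea_mem_subalgebra (AlgHom.id ℂ (UniversalEnvelopingAlgebra ℂ L)) A
      (fun y => hV y) u
    exact this
  rw [eq_top_iff]
  intro m _hm
  obtain ⟨w, rfl⟩ := Submodule.Quotient.mk_surjective _ m
  have h1 : (Submodule.Quotient.mk w : VermaModT E φ a) = w • Submodule.Quotient.mk 1 := by
    rw [← Submodule.Quotient.mk_smul, smul_eq_mul, mul_one]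
  rw [h1]
  exact hA w _ (Submodule.subset_span ⟨[], mon_nil a E φ⟩)

end Aux7
section Aux8
open MvPolynomial UniversalEnvelopingAlgebra

variable {d : ℕ → ℕ} {L : Type} [LieRing L] [LieAlgebra ℂ L]
variable (a : ℂ) (E : HeisenbergL d L) (φ : ℕ → ℕ → Bool)

lemma fbar_mon (l : List (NI d φ)) :
    fbar a E φ (mon a E φ l) = (l.map (fun q => (X q : Fock d φ))).prod := by
  induction l with
  | nil =>
    rw [mon_nil, fbar_mk, List.map_nil, List.prod_nil]
    have h1 : Phi a E φ 1 = 1 := map_one _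
    rw [h1]
    rfl
  | cons q l ih =>
    rw [mon_cons, fbar_smul, ih, List.map_cons, List.prod_cons, xneg, Phi_ι]
    obtain ⟨hb0, h4⟩ := q.property
    rw [rho0_x_neg a E φ hb0 h4]
    rfl

lemma prodX_eq (l : List (NI d φ)) :
    (l.map (fun q => (X q : Fock d φ))).prod = monomial (Multiset.toFinsupp (↑l)) 1 := by
  induction l with
  | nil => simp
  | cons q l ih =>
    rw [List.map_cons, List.prod_cons, ih,
      show ((q :: l : List (NI d φ)) : Multiset (NI d φ)) = {q} + (↑l : Multiset (NI d φ)) by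
        rw [Multiset.singleton_add, Multiset.cons_coe],
      map_add, Multiset.toFinsupp_singleton, monomial_single_add, pow_one]

lemma pairwise_comm (l : List (NI d φ)) : (l.map (xneg E φ)).Pairwise Commute := by
  induction l with
  | nil => simp
  | cons q l ih =>
    rw [List.map_cons, List.pairwise_cons]
    refine ⟨?_, ih⟩
    intro b hb
    obtain ⟨q', _, rfl⟩ := List.mem_map.1 hb
    exact xneg_comm E φ q q'

lemma mon_perm {l l' : List (NI d φ)} (h : List.Perm l l') : mon a E φ l = mon a E φ l' := by
  rw [mon, mon]
  congr 1
  exact List.Perm.prod_eq' (h.map _) (pairwise_comm E φ l)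

/-- left inverse of `fbar` -/
noncomputable def gmap : Fock d φ →ₗ[ℂ] VermaModT E φ a :=
  (basisMonomials (NI d φ) ℂ).constr ℂ fun μ => mon a E φ (Finsupp.toMultiset μ).toList

lemma gmap_fbar_mon (l : List (NI d φ)) :
    gmap a E φ (fbar a E φ (mon a E φ l)) = mon a E φ l := by
  rw [fbar_mon, prodX_eq]
  have hb : (monomial (Multiset.toFinsupp (↑l : Multiset (NI d φ))) (1 : ℂ))
      = basisMonomials (NI d φ) ℂ (Multiset.toFinsupp (↑l : Multiset (NI d φ))) := by
    rw [coe_basisMonomials]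
  rw [hb, gmap, Module.Basis.constr_basis]
  apply mon_perm
  rw [← Multiset.coe_eq_coe, Multiset.coe_toList, Multiset.toFinsupp_toMultiset]

lemma gmap_fbar (m : VermaModT E φ a) : gmap a E φ (fbar a E φ m) = m := by
  have hm : m ∈ monSpan a E φ := by rw [monSpan_top]; trivial
  induction hm using Submodule.span_induction with
  | mem x hx => obtain ⟨l, rfl⟩ := hx; exact gmap_fbar_mon a E φ l
  | zero => rw [map_zero, map_zero]
  | add x y _ _ hx hy => rw [map_add, map_add, hx, hy]
  | smul b x _ hx => rw [map_smul, map_smul, hx]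

lemma fbar_injective : Function.Injective (fbar a E φ) := by
  intro m m' h
  rw [← gmap_fbar a E φ m, ← gmap_fbar a E φ m', h]

end Aux8
section Aux9
open MvPolynomial UniversalEnvelopingAlgebra

lemma eq_C_of_totalDegree_eq_zero {σ : Type} [DecidableEq σ] {p : MvPolynomial σ ℂ}
    (h : p.totalDegree = 0) : p = C (coeff 0 p) := by
  apply MvPolynomial.ext
  intro m
  by_cases hm : m = 0
  · subst hm; rw [coeff_C, if_pos rfl]
  · rw [coeff_C, if_neg (Ne.symm hm)]
    by_contra hc
    have hmem : m ∈ p.support := by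
      rw [MvPolynomial.mem_support_iff]
      exact hc
    have := (totalDegree_eq_zero_iff σ p).1 h m hmem
    apply hm
    ext x
    exact this x

lemma exists_foldr_pderiv_eq_C {σ : Type} [DecidableEq σ] (p : MvPolynomial σ ℂ)
    (hp : p ≠ 0) :
    ∃ (l : List σ) (b : ℂ), b ≠ 0 ∧
      l.foldr (fun i q => pderiv i q) p = C b := by
  generalize hdeg : p.totalDegree = n
  induction n using Nat.strong_induction_on generalizing p with
  | _ n ih =>
  rcases Nat.eq_zero_or_pos n with hn | hn
  · subst hn
    refine ⟨[], coeff 0 p, ?_, eq_C_of_totalDegree_eq_zero hdeg⟩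
    intro h0
    apply hp
    rw [eq_C_of_totalDegree_eq_zero hdeg, h0, map_zero]
  · -- positive total degree: find a maximal monomial and a variable occurring in it
    have hsupp : p.support.Nonempty := by
      rw [Finset.nonempty_iff_ne_empty]
      intro hc
      exact hp (MvPolynomial.support_eq_empty.1 hc)
    obtain ⟨m, hm, hms⟩ := Finset.exists_mem_eq_sup p.support hsupp
      (fun s => s.sum fun _ e => e)
    have hmsum : (m.sum fun _ e => e) = n := by
      rw [← hdeg, MvPolynomial.totalDegree, hms]
    have hmpos : 0 < m.sum fun _ e => e := by omega
    have : ∃ i, m i ≠ 0 := by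
      by_contra hc
      push_neg at hc
      have hm0 : m = 0 := Finsupp.ext fun j => hc j
      rw [hm0, Finsupp.sum_zero_index] at hmpos
      omega
    obtain ⟨i, hi⟩ := this
    set p' := pderiv i p with hp'
    have hcoeff : coeff (m - Finsupp.single i 1) p' = (m i : ℂ) * coeff m p := by
      rw [hp', _root_.coeff_pderiv]
      have h1 : (m - Finsupp.single i 1) + Finsupp.single i 1 = m :=
        tsub_add_cancel_of_le (Finsupp.single_le_iff.2 (by omega))
      rw [h1]
      have h2 : ((m - Finsupp.single i 1) : σ →₀ ℕ) i + 1 = m i := by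
        rw [Finsupp.tsub_apply, Finsupp.single_eq_same]
        omega
      rw [← h2]
      push_cast
      ring
    have hp'ne : p' ≠ 0 := by
      intro hc
      rw [hc] at hcoeff
      have : coeff m p ≠ 0 := MvPolynomial.mem_support_iff.1 hm
      have hmi : (m i : ℂ) ≠ 0 := Nat.cast_ne_zero.2 hi
      simp only [MvPolynomial.coeff_zero] at hcoeff
      exact this (by
        field_simp at hcoeff
        exact (mul_eq_zero.1 hcoeff.symm).resolve_left hmi)
    have hdeg' : p'.totalDegree < n := by
      rw [MvPolynomial.totalDegree]
      apply Finset.sup_lt_iff (show (⊥ : ℕ) < n from Nat.bot_eq_zero ▸ hn) |>.2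
      intro k hk
      have hck : coeff k p' ≠ 0 := MvPolynomial.mem_support_iff.1 hk
      rw [hp', _root_.coeff_pderiv] at hck
      have : coeff (k + Finsupp.single i 1) p ≠ 0 := fun hc => hck (by rw [hc, mul_zero])
      have hle := MvPolynomial.le_totalDegree (MvPolynomial.mem_support_iff.2 this)
      rw [hdeg] at hle
      have hsum : ((k + Finsupp.single i 1).sum fun _ e => e)
          = (k.sum fun _ e => e) + 1 := by
        rw [Finsupp.sum_add_index' (fun _ => rfl) (fun _ _ _ => rfl)]
        simp [Finsupp.sum_single_index]
      omega
    obtain ⟨l, b, hb, hfold⟩ := ih p'.totalDegree hdeg' p' hp'ne rfl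
    refine ⟨l ++ [i], b, hb, ?_⟩
    rw [List.foldr_append]
    exact hfold

end Aux9
section Aux10
open MvPolynomial UniversalEnvelopingAlgebra

variable {d : ℕ → ℕ} {L : Type} [LieRing L] [LieAlgebra ℂ L]
variable (a : ℂ) (E : HeisenbergL d L) (φ : ℕ → ℕ → Bool)

lemma fbar_vac : fbar a E φ (Submodule.Quotient.mk 1) = 1 := by
  rw [fbar_mk]
  have h1 : Phi a E φ 1 = 1 := map_one _
  rw [h1]
  rfl

lemma vac_ne_zero : (Submodule.Quotient.mk 1 : VermaModT E φ a) ≠ 0 := by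
  intro h
  have h2 := fbar_vac a E φ
  erw [h, map_zero] at h2
  exact one_ne_zero h2.symm

lemma top_of_vac (N : Submodule (UniversalEnvelopingAlgebra ℂ L) (VermaModT E φ a))
    (h : (Submodule.Quotient.mk 1 : VermaModT E φ a) ∈ N) : N = ⊤ := by
  rw [eq_top_iff]
  intro m _hm
  obtain ⟨w, rfl⟩ := Submodule.Quotient.mk_surjective _ m
  have h1 : (Submodule.Quotient.mk w : VermaModT E φ a) = w • Submodule.Quotient.mk 1 := by
    rw [← Submodule.Quotient.mk_smul, smul_eq_mul, mul_one]
  rw [h1]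
  exact N.smul_mem w h

lemma csmul_mem (N : Submodule (UniversalEnvelopingAlgebra ℂ L) (VermaModT E φ a))
    (b : ℂ) {m : VermaModT E φ a} (hm : m ∈ N) : b • m ∈ N := by
  rw [← algebraMap_smul (UniversalEnvelopingAlgebra ℂ L) b m]
  exact N.smul_mem _ hm

lemma exists_mem_fbar_foldr (ha : a ≠ 0)
    (N : Submodule (UniversalEnvelopingAlgebra ℂ L) (VermaModT E φ a))
    {n : VermaModT E φ a} (hn : n ∈ N) (l : List (NI d φ)) :
    ∃ n' ∈ N, fbar a E φ n' = l.foldr (fun i q => pderiv i q) (fbar a E φ n) := by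
  induction l with
  | nil => exact ⟨n, hn, rfl⟩
  | cons i l ih =>
    obtain ⟨n', hn', hf⟩ := ih
    set c0 : ℂ := a * ((-i.val.1 : ℤ) : ℂ) with hc0def
    have hc0 : c0 ≠ 0 := by
      have hi1 : i.val.1 ≠ 0 := i.property.1.1
      apply mul_ne_zero ha
      simpa using hi1
    refine ⟨c0⁻¹ • ((ι ℂ (E.x (-i.val.1) i.val.2) : UniversalEnvelopingAlgebra ℂ L) • n'),
      csmul_mem a E φ N _ (N.smul_mem _ hn'), ?_⟩
    rw [map_smul, fbar_smul, Phi_ι]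
    have hpos := partner_of_neg i
    rw [rho0_x_pos a E φ hpos]
    have hidx : (⟨(-(-i.val.1 : ℤ), i.val.2), partner_of_pos hpos⟩ : NI d φ) = i :=
      Subtype.ext (show ((-(-i.val.1 : ℤ), i.val.2) : ℤ × ℕ) = i.val by rw [neg_neg])
    rw [hidx]
    show c0⁻¹ • (c0 • pderiv i (fbar a E φ n')) = _
    rw [smul_smul, inv_mul_cancel₀ hc0, one_smul, hf]
    rfl

lemma vac_mem (ha : a ≠ 0)
    (N : Submodule (UniversalEnvelopingAlgebra ℂ L) (VermaModT E φ a))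
    {n : VermaModT E φ a} (hn : n ∈ N) (hn0 : n ≠ 0) :
    (Submodule.Quotient.mk 1 : VermaModT E φ a) ∈ N := by
  have hp : fbar a E φ n ≠ 0 := by
    intro hc
    exact hn0 (fbar_injective a E φ (by rw [hc, map_zero]))
  obtain ⟨l, b, hb, hfold⟩ := exists_foldr_pderiv_eq_C (fbar a E φ n) hp
  obtain ⟨n', hn', hf⟩ := exists_mem_fbar_foldr a E φ ha N hn l
  rw [hfold] at hf
  have hsm : fbar a E φ (b • (Submodule.Quotient.mk 1 : VermaModT E φ a)) = C b := by
    erw [map_smul, fbar_vac, smul_eq_C_mul, mul_one]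
  have heq : n' = b • (Submodule.Quotient.mk 1 : VermaModT E φ a) :=
    fbar_injective a E φ (by rw [hf, hsm])
  have : (Submodule.Quotient.mk 1 : VermaModT E φ a) = b⁻¹ • n' := by
    erw [heq, smul_smul, inv_mul_cancel₀ hb, one_smul]
  rw [this]
  exact csmul_mem a E φ N _ hn'

end Aux10

theorem stmt_15 (d : ℕ → ℕ) (hd : ∀ k, 1 ≤ d k) (L : Type) [LieRing L] [LieAlgebra ℂ L]
    (E : HeisenbergL d L) (φ : ℕ → ℕ → Bool) (a : ℂ) :
    IsSimpleModule (UniversalEnvelopingAlgebra ℂ L) (VermaModT E φ a) ↔ a ≠ 0 := by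
  open MvPolynomial UniversalEnvelopingAlgebra in
  constructor
  · intro hs ha0
    subst ha0
    -- the cyclic submodule generated by a negative basis vector
    have hq0 : ((if φ 1 1 then (-1 : ℤ) else 1, 1) : ℤ × ℕ).1 ≠ 0 ∧
        1 ≤ ((if φ 1 1 then (-1 : ℤ) else 1, 1) : ℤ × ℕ).2 ∧
        ((if φ 1 1 then (-1 : ℤ) else 1, 1) : ℤ × ℕ).2
          ≤ d ((if φ 1 1 then (-1 : ℤ) else 1, 1) : ℤ × ℕ).1.natAbs := by
      by_cases hφ : φ 1 1 <;> simp [hφ, hd 1]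
    have hq0n : ((if φ 1 1 then (-1 : ℤ) else 1, 1) : ℤ × ℕ) ∉ posIdxT d φ := by
      rintro ⟨-, -, -, (⟨hk, hφ⟩ | ⟨hk, hφ⟩)⟩ <;> by_cases hφ1 : φ 1 1 <;>
        simp [hφ1] at hk hφ <;> omega
    set q0 : NI d φ := ⟨(if φ 1 1 then (-1 : ℤ) else 1, 1), hq0, hq0n⟩ with hq0def
    set N0 : Submodule (UniversalEnvelopingAlgebra ℂ L) (VermaModT E φ 0) :=
      Submodule.span (UniversalEnvelopingAlgebra ℂ L) {mon 0 E φ [q0]} with hN0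
    have hXq0 : fbar 0 E φ (mon 0 E φ [q0]) = X q0 := by
      rw [fbar_mon, List.map_singleton, List.prod_singleton]
    rcases hs.toIsSimpleOrder.2 N0 with hbot | htop
    · have hmem : mon 0 E φ [q0] ∈ N0 := Submodule.subset_span rfl
      rw [hbot, Submodule.mem_bot] at hmem
      rw [hmem, map_zero] at hXq0
      exact X_ne_zero q0 hXq0.symm
    · have hvac : (Submodule.Quotient.mk 1 : VermaModT E φ 0) ∈ N0 := by
        rw [htop]; trivial
      rw [hN0] at hvac
      obtain ⟨u, hu⟩ := (Submodule.mem_span_singleton (M := VermaModT E φ 0)).1 hvac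
      have h1 : Phi 0 E φ u (X q0) = 1 := by
        have := congrArg (fbar 0 E φ) hu
        rw [fbar_smul, hXq0, fbar_vac] at this
        exact this
      -- the subalgebra of operators preserving "zero constant coefficient"
      set S : Subalgebra ℂ (Module.End ℂ (Fock d φ)) :=
        { carrier := {T | ∀ p : Fock d φ, constantCoeff p = 0 → constantCoeff (T p) = 0}
          mul_mem' := fun {T} {T'} hT hT' p hp => hT _ (hT' _ hp)
          one_mem' := fun p hp => hp
          add_mem' := fun {T} {T'} hT hT' p hp => by
            rw [LinearMap.add_apply, map_add, hT _ hp, hT' _ hp, add_zero]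
          zero_mem' := fun p hp => by rw [LinearMap.zero_apply, map_zero]
          algebraMap_mem' := fun b p hp => by
            rw [Module.algebraMap_end_apply, constantCoeff_smul, hp, smul_zero] } with hS
      have hPhiS : ∀ u', Phi 0 E φ u' ∈ S := by
        intro u'
        apply uea_mem_subalgebra
        intro y
        rw [Phi_ι]
        -- linear subspace of Lie elements mapped into S
        let V : Submodule ℂ L :=
          { carrier := {y | rho0 0 E φ y ∈ S}
            add_mem' := fun {y} {z} hy hz => by
              show rho0 0 E φ (y + z) ∈ S
              rw [map_add]; exact S.add_mem hy hz
            zero_mem' := by show rho0 0 E φ 0 ∈ S; rw [map_zero]; exact S.zero_mem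
            smul_mem' := fun b y hy => by
              show rho0 0 E φ (b • y) ∈ S
              rw [map_smul]; exact S.smul_mem hy b }
        have hbasis : ∀ i, E.basis i ∈ V := by
          intro i
          rcases i with _ | p
          · rw [E.basis_none]
            show rho0 0 E φ E.c ∈ S
            rw [rho0_c, zero_smul]
            exact S.zero_mem
          · rw [E.basis_some]
            by_cases hpp : p.val ∈ posIdxT d φ
            · show rho0 0 E φ (E.x p.val.1 p.val.2) ∈ S
              rw [rho0_x_pos 0 E φ hpp, zero_mul, zero_smul]
              exact S.zero_mem
            · show rho0 0 E φ (E.x p.val.1 p.val.2) ∈ S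
              rw [rho0_x_neg 0 E φ p.property hpp]
              intro f hf
              rw [LinearMap.mulLeft_apply, map_mul, constantCoeff_X, zero_mul]
        have hV : y ∈ V := by
          have hle : Submodule.span ℂ (Set.range E.basis) ≤ V :=
            Submodule.span_le.2 (by rintro - ⟨i, rfl⟩; exact hbasis i)
          rw [E.basis.span_eq] at hle
          exact hle trivial
        exact hV
      have hc1 := hPhiS u (X q0) (by simp)
      rw [h1] at hc1
      simp at hc1
  · intro ha
    haveI : Nontrivial (VermaModT E φ a) :=
      ⟨⟨Submodule.Quotient.mk 1, 0, vac_ne_zero a E φ⟩⟩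
    refine IsSimpleModule.mk (toIsSimpleOrder := ⟨?_⟩)
    intro N
    by_cases hN : N = ⊥
    · exact Or.inl hN
    · right
      obtain ⟨n, hn, hn0⟩ := (Submodule.ne_bot_iff N).1 hN
      exact top_of_vac a E φ N (vac_mem a E φ ha N hn hn0)
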